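/- Let N be a prime and 1 ≤ d ≤ N. Consider the action of the unit group (ℤ/Nℤ)ˣ on the set of d-tuples of pairwise distinct elements of ℤ/Nℤ by coordinatewise multiplication. The number of orbits of this action equals: 2, if d = 1, or if d = N = 2; and N·(N−2)·(N−3)⋯(N−d+1) (the product N·∏_{j=2}^{d−1}(N−j)), if d ≥ 2 and N > 2. -/

import Mathlib

open scoped BigOperators

/-- The orbit equivalence relation, on `d`-tuples of pairwise distinct elements of
`ℤ/Nℤ`, induced by the coordinatewise multiplication action of `(ℤ/Nℤ)ˣ`. -/
def tupleOrbitRel (N d : ℕ) (n n' : {f : Fin d → ZMod N // Function.Injective f}) :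
    Prop :=
  ∃ u : (ZMod N)ˣ, ∀ k, n'.1 k = (u : ZMod N) * n.1 k

instance tupleMulAction (N d : ℕ) :
    MulAction (ZMod N)ˣ {f : Fin d → ZMod N // Function.Injective f} where
  smul u n := ⟨fun k => (u : ZMod N) * n.1 k, fun a b h => n.2 (by
    have := congrArg (fun x => ((u⁻¹ : (ZMod N)ˣ) : ZMod N) * x) h
    simpa [← mul_assoc] using this)⟩
  one_smul n := Subtype.ext <| funext fun k => by
    show ((1 : (ZMod N)ˣ) : ZMod N) * n.1 k = n.1 k
    simp
  mul_smul u v n := Subtype.ext <| funext fun k => by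
    show ((u * v : (ZMod N)ˣ) : ZMod N) * n.1 k = (u : ZMod N) * ((v : ZMod N) * n.1 k)
    push_cast
    ring

lemma tuple_smul_apply (N d : ℕ) (u : (ZMod N)ˣ)
    (n : {f : Fin d → ZMod N // Function.Injective f}) (k : Fin d) :
    (u • n).1 k = (u : ZMod N) * n.1 k := rfl

lemma tupleOrbitRel_iff (N d : ℕ) (n n' : {f : Fin d → ZMod N // Function.Injective f}) :
    tupleOrbitRel N d n n' ↔ (MulAction.orbitRel (ZMod N)ˣ _).r n n' := by
  constructor
  · rintro ⟨u, hu⟩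
    exact ⟨u⁻¹, Subtype.ext <| funext fun k => by
      simp [tuple_smul_apply, hu k, ← mul_assoc]⟩
  · rintro ⟨u, hu⟩
    exact ⟨u⁻¹, fun k => by
      rw [← hu]; simp [tuple_smul_apply, ← mul_assoc]⟩

noncomputable def quotEquiv (N d : ℕ) :
    Quot (tupleOrbitRel N d) ≃
      MulAction.orbitRel.Quotient (ZMod N)ˣ {f : Fin d → ZMod N // Function.Injective f} :=
  Quot.congrRight (tupleOrbitRel_iff N d)

lemma card_X (N d : ℕ) [NeZero N] :
    Nat.card {f : Fin d → ZMod N // Function.Injective f} = N.descFactorial d := by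
  rw [Nat.card_congr (Equiv.subtypeInjectiveEquivEmbedding (Fin d) (ZMod N)),
    Nat.card_eq_fintype_card, Fintype.card_embedding_eq, Fintype.card_fin,
    ZMod.card]

lemma stab_bot (N d : ℕ) (hN : N.Prime) (hd : 2 ≤ d)
    (x : {f : Fin d → ZMod N // Function.Injective f}) :
    MulAction.stabilizer (ZMod N)ˣ x = ⊥ := by
  have : Fact N.Prime := ⟨hN⟩
  rw [Subgroup.eq_bot_iff_forall]
  intro u hu
  rw [MulAction.mem_stabilizer_iff] at hu
  have h0 : (⟨0, by omega⟩ : Fin d) ≠ ⟨1, by omega⟩ := by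
    simp [Fin.ext_iff]
  have hne := x.2.ne h0
  obtain ⟨k, hk⟩ : ∃ k, x.1 k ≠ 0 := by
    by_contra h
    push_neg at h
    exact hne (by rw [h, h])
  have := congrArg (fun f => f.1 k) hu
  simp only [tuple_smul_apply] at this
  have hu1 : (u : ZMod N) = 1 := mul_right_cancel₀ hk (by rw [this, one_mul])
  exact Units.ext hu1

lemma card_units (N : ℕ) [NeZero N] (hN : N.Prime) :
    Nat.card (ZMod N)ˣ = N - 1 := by
  rw [Nat.card_eq_fintype_card, ZMod.card_units_eq_totient, Nat.totient_prime hN]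

noncomputable def orbit_equiv (N d : ℕ) (hN : N.Prime) (hd : 2 ≤ d)
    (x : {f : Fin d → ZMod N // Function.Injective f}) :
    (ZMod N)ˣ ≃ MulAction.orbit (ZMod N)ˣ x := by
  refine Equiv.ofBijective (fun u => ⟨u • x, MulAction.mem_orbit x u⟩) ⟨?_, ?_⟩
  · intro u v h
    have h' : u • x = v • x := Subtype.ext_iff.mp h
    have hmem : (v⁻¹ * u) ∈ MulAction.stabilizer (ZMod N)ˣ x := by
      rw [MulAction.mem_stabilizer_iff, mul_smul, h', inv_smul_smul]
    rw [stab_bot N d hN hd, Subgroup.mem_bot] at hmem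
    have := congrArg (v * ·) hmem
    simpa [← mul_assoc] using this
  · rintro ⟨y, u, hu⟩
    exact ⟨u, Subtype.ext hu⟩

set_option maxHeartbeats 1000000 in
lemma key_count (N d : ℕ) [NeZero N] (hN : N.Prime) (hd : 2 ≤ d) :
    Nat.card (Quot (tupleOrbitRel N d)) * (N - 1) = N.descFactorial d := by
  rw [← card_units N hN, ← card_X N d, Nat.card_congr (quotEquiv N d)]
  set X := {f : Fin d → ZMod N // Function.Injective f}
  have e : X ≃ (MulAction.orbitRel.Quotient (ZMod N)ˣ X) × (ZMod N)ˣ :=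
    (MulAction.selfEquivSigmaOrbits (ZMod N)ˣ X).trans <|
      (Equiv.sigmaCongrRight fun (ω : MulAction.orbitRel.Quotient (ZMod N)ˣ X) => (orbit_equiv N d hN hd ω.out).symm).trans
        (Equiv.sigmaEquivProd _ _)
  rw [Nat.card_congr e, Nat.card_prod]

lemma descFactorial_split (N d : ℕ) (hd : 2 ≤ d) :
    N.descFactorial d = N * (N - 1) * ∏ j ∈ Finset.Icc 2 (d - 1), (N - j) := by
  rw [Nat.descFactorial_eq_prod_range]
  rw [Finset.range_eq_Ico, ← Finset.prod_Ico_consecutive _ (Nat.zero_le 2) hd]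
  have h2 : Finset.Ico 2 d = Finset.Icc 2 (d - 1) := by
    rw [← Finset.Ico_add_one_right_eq_Icc, Nat.sub_add_cancel (by omega)]
  rw [h2]
  have h3 : ∏ i ∈ Finset.Ico 0 2, (N - i) = N * (N - 1) := by
    rw [← Finset.range_eq_Ico, Finset.prod_range_succ, Finset.prod_range_one,
      Nat.sub_zero]
  rw [h3]

/-- d = 1 case -/
lemma card_d_one (N : ℕ) [NeZero N] (hN : N.Prime) :
    Nat.card (Quot (tupleOrbitRel N 1)) = 2 := by
  have : Fact N.Prime := ⟨hN⟩
  have hinj : ∀ f : Fin 1 → ZMod N, Function.Injective f := fun f a b _ =>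
    Subsingleton.elim a b
  let F : Quot (tupleOrbitRel N 1) → Bool :=
    Quot.lift (fun n => decide (n.1 0 = 0)) (by
      rintro n n' ⟨u, hu⟩
      simp only [decide_eq_decide, hu 0]
      constructor
      · intro h; rw [h, mul_zero]
      · intro h
        rcases mul_eq_zero.mp h with h | h
        · exact absurd h u.ne_zero
        · exact h)
  have hbij : Function.Bijective F := by
    constructor
    · rintro ⟨n⟩ ⟨n'⟩ h
      simp only [F, Quot.lift_mk, decide_eq_decide] at h
      apply Quot.sound
      by_cases h0 : n.1 0 = 0
      · have h0' : n'.1 0 = 0 := h.mp h0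
        exact ⟨1, fun k => by
          rw [Fin.fin_one_eq_zero k, h0, h0']; simp⟩
      · have h0' : n'.1 0 ≠ 0 := fun hh => h0 (h.mpr hh)
        refine ⟨Units.mk0 (n'.1 0 / n.1 0) (div_ne_zero h0' h0), fun k => ?_⟩
        rw [Fin.fin_one_eq_zero k]
        simp [div_mul_cancel₀ _ h0]
    · intro b
      cases b
      · exact ⟨Quot.mk _ ⟨fun _ => 1, hinj _⟩, by simp [F]⟩
      · exact ⟨Quot.mk _ ⟨fun _ => 0, hinj _⟩, by simp [F]⟩
  rw [Nat.card_congr (Equiv.ofBijective F hbij)]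
  simp

theorem card_tuple_orbits (N d : ℕ) [NeZero N] (hN : N.Prime) (hd : 1 ≤ d)
    (hdN : d ≤ N) :
    ((d = 1 ∨ (d = 2 ∧ N = 2)) →
        Nat.card (Quot (tupleOrbitRel N d)) = 2) ∧
    (2 ≤ d → 2 < N →
        Nat.card (Quot (tupleOrbitRel N d)) =
          N * ∏ j ∈ Finset.Icc 2 (d - 1), (N - j)) := by
  have hgen : ∀ hd2 : 2 ≤ d,
      Nat.card (Quot (tupleOrbitRel N d)) =
        N * ∏ j ∈ Finset.Icc 2 (d - 1), (N - j) := by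
    intro hd2
    have h := key_count N d hN hd2
    rw [descFactorial_split N d hd2] at h
    have hpos : 0 < N - 1 := by have := hN.two_le; omega
    apply Nat.eq_of_mul_eq_mul_right hpos
    rw [h]; ring
  constructor
  · rintro (rfl | ⟨rfl, rfl⟩)
    · exact card_d_one N hN
    · rw [hgen le_rfl]; decide
  · intro hd2 _
    exact hgen hd2
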